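/- Consider the storage scheduling LP over T time periods with charging efficiency η^C ∈ (0,1], discharging efficiency η^D ∈ (0,1], round-trip efficiency η = η^C·η^D < 1, and all prices strictly positive (C_t > 0 for all t). Then every optimal solution of the LP satisfies p_t^C · p_t^D = 0 for every time period t, i.e., no optimal solution exhibits simultaneous charge and discharge. -/

import Mathlib

open Finset

def feasible (T : ℕ) (Δt ρ ηC ηD Slb Sub Sinit PC PD : ℝ)
    (s pC pD : ℕ → ℝ) : Prop :=
  s 0 = Sinit ∧
  (∀ t ∈ Icc 1 T, s t = ρ * s (t - 1) + Δt * (ηC * pC t - (1 / ηD) * pD t)) ∧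
  (∀ t ∈ Icc 1 T, Slb ≤ s t ∧ s t ≤ Sub) ∧
  (∀ t ∈ Icc 1 T, 0 ≤ pC t ∧ pC t ≤ PC) ∧
  (∀ t ∈ Icc 1 T, 0 ≤ pD t ∧ pD t ≤ PD)

def objective (T : ℕ) (Δt : ℝ) (C : ℕ → ℝ) (pC pD : ℕ → ℝ) : ℝ :=
  ∑ t ∈ Icc 1 T, Δt * C t * (pD t - pC t)

def optimal (T : ℕ) (Δt ρ ηC ηD Slb Sub Sinit PC PD : ℝ) (C : ℕ → ℝ)
    (s pC pD : ℕ → ℝ) : Prop :=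
  feasible T Δt ρ ηC ηD Slb Sub Sinit PC PD s pC pD ∧
  ∀ s' pC' pD', feasible T Δt ρ ηC ηD Slb Sub Sinit PC PD s' pC' pD' →
    objective T Δt C pC' pD' ≤ objective T Δt C pC pD

theorem stmt0 (T : ℕ) (Δt ρ ηC ηD Slb Sub Sinit PC PD : ℝ) (C : ℕ → ℝ)
    (hΔt : 0 < Δt) (hρ0 : 0 < ρ) (hρ1 : ρ ≤ 1)
    (hηC0 : 0 < ηC) (hηC1 : ηC ≤ 1) (hηD0 : 0 < ηD) (hηD1 : ηD ≤ 1)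
    (hη : ηC * ηD < 1)
    (hS0 : 0 ≤ Slb) (hS : Slb < Sub) (hPC : 0 < PC) (hPD : 0 < PD)
    (hC : ∀ t ∈ Icc 1 T, 0 < C t)
    (s pC pD : ℕ → ℝ)
    (hopt : optimal T Δt ρ ηC ηD Slb Sub Sinit PC PD C s pC pD) :
    ∀ t ∈ Icc 1 T, pC t * pD t = 0 := by
  intro t0 ht0
  by_contra hne
  obtain ⟨⟨hs0, hdyn, hsb, hpCb, hpDb⟩, hbest⟩ := hopt
  have hCpos : 0 < pC t0 := lt_of_le_of_ne (hpCb t0 ht0).1 (by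
    intro h; exact hne (by rw [← h]; ring))
  have hDpos : 0 < pD t0 := lt_of_le_of_ne (hpDb t0 ht0).1 (by
    intro h; exact hne (by rw [← h]; ring))
  have hηη : 0 < ηC * ηD := mul_pos hηC0 hηD0
  set ε : ℝ := min (pC t0) (pD t0 / (ηC * ηD)) with hε
  have hεpos : 0 < ε := lt_min hCpos (div_pos hDpos hηη)
  have hε1 : ε ≤ pC t0 := min_le_left _ _
  have hε2 : ηC * ηD * ε ≤ pD t0 := by
    have := min_le_right (pC t0) (pD t0 / (ηC * ηD))
    calc ηC * ηD * ε ≤ ηC * ηD * (pD t0 / (ηC * ηD)) := by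
          exact mul_le_mul_of_nonneg_left this hηη.le
      _ = pD t0 := by field_simp
  set pC' : ℕ → ℝ := fun t => if t = t0 then pC t0 - ε else pC t with hpC'
  set pD' : ℕ → ℝ := fun t => if t = t0 then pD t0 - ηC * ηD * ε else pD t with hpD'
  have hfeas' : feasible T Δt ρ ηC ηD Slb Sub Sinit PC PD s pC' pD' := by
    refine ⟨hs0, ?_, hsb, ?_, ?_⟩
    · intro t ht
      rcases eq_or_ne t t0 with rfl | hnet
      · have := hdyn t ht
        simp only [hpC', hpD', if_pos rfl]
        rw [this]
        have h1 : (1 / ηD) * (ηC * ηD * ε) = ηC * ε := by field_simp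
        linear_combination (-Δt) * h1
      · simpa only [hpC', hpD', if_neg hnet] using hdyn t ht
    · intro t ht
      rcases eq_or_ne t t0 with rfl | hnet
      · simp only [hpC', if_pos rfl]
        constructor
        · linarith
        · have := (hpCb t ht).2; linarith
      · simpa only [hpC', if_neg hnet] using hpCb t ht
    · intro t ht
      rcases eq_or_ne t t0 with rfl | hnet
      · simp only [hpD', if_pos rfl]
        constructor
        · linarith
        · have := (hpDb t ht).2
          nlinarith
      · simpa only [hpD', if_neg hnet] using hpDb t ht
  have hle := hbest s pC' pD' hfeas'
  have hlt : objective T Δt C pC pD < objective T Δt C pC' pD' := by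
    unfold objective
    apply Finset.sum_lt_sum
    · intro i hi
      rcases eq_or_ne i t0 with rfl | hnet
      · simp only [hpC', hpD', if_pos rfl]
        have hCi := hC i hi
        have : pD i - pC i ≤ pD i - ηC * ηD * ε - (pC i - ε) := by nlinarith
        nlinarith [mul_pos hΔt hCi]
      · simp [hpC', hpD', if_neg hnet]
    · refine ⟨t0, ht0, ?_⟩
      simp only [hpC', hpD', if_pos rfl]
      have hCi := hC t0 ht0
      have : pD t0 - pC t0 < pD t0 - ηC * ηD * ε - (pC t0 - ε) := by nlinarith
      nlinarith [mul_pos hΔt hCi]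
  linarith
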